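/- Assume the bias-only noise model and that every agent is incident to at least one LOS edge. If the LOS network (agent positions x_j, anchor positions a_ℓ, the LOS edges of E_X and E_A, and the true distances on these edges) is non-contractible, then every zero-objective feasible point (X̂, Y, B) of the cooperative SDP relaxation satisfies X̂ = X, i.e., the SDP relaxation recovers the true agent positions exactly. -/

import Mathlib

open Matrix RealInnerProductSpace

/-- The Gram matrix `X̂X̂ᵀ` of a configuration of points `xhat` (its entries are the
inner products of the rows of `X̂`). -/
noncomputable def gramMatrix {N k : ℕ} (xhat : Fin N → EuclideanSpace ℝ (Fin k)) :
    Matrix (Fin N) (Fin N) ℝ :=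
  Matrix.of fun i j => ⟪xhat i, xhat j⟫

/-- Zero-objective feasible point `(X̂, Y, B)` of the cooperative SDP relaxation:
`Y` is symmetric with `Y - X̂X̂ᵀ ⪰ 0`, the bias variables are nonnegative on all edges,
and every term of the objective vanishes: `e_{ij}ᵀ Y e_{ij} - d̃_{ij}² + b_{ij} = 0` on
agent–agent edges and `e_iᵀ Y e_i - 2⟪a_j, X̂ᵀe_i⟫ + ‖a_j‖² - d̃_{ij}² + b_{ij} = 0` on
agent–anchor edges. -/
def ZeroObjFeasible {N M k : ℕ} (a : Fin M → EuclideanSpace ℝ (Fin k))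
    (EX : Set (Fin N × Fin N)) (EA : Set (Fin N × Fin M))
    (dtX : Fin N × Fin N → ℝ) (dtA : Fin N × Fin M → ℝ)
    (xhat : Fin N → EuclideanSpace ℝ (Fin k)) (Y : Matrix (Fin N) (Fin N) ℝ)
    (bX : Fin N × Fin N → ℝ) (bA : Fin N × Fin M → ℝ) : Prop :=
  Y.IsSymm ∧ (Y - gramMatrix xhat).PosSemidef ∧
  (∀ p ∈ EX, 0 ≤ bX p) ∧ (∀ p ∈ EA, 0 ≤ bA p) ∧
  (∀ p ∈ EX,
    (Pi.single p.1 1 - Pi.single p.2 1) ⬝ᵥ (Y *ᵥ (Pi.single p.1 1 - Pi.single p.2 1))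
      - dtX p + bX p = 0) ∧
  (∀ p ∈ EA,
    (Pi.single p.1 (1 : ℝ)) ⬝ᵥ (Y *ᵥ Pi.single p.1 1) - 2 * ⟪a p.2, xhat p.1⟫
      + ‖a p.2‖ ^ 2 - dtA p + bA p = 0)

/-- Pad a vector in `ℝ^k` with `h - k` trailing zeros to get a vector in `ℝ^h`. -/
noncomputable def padZero {k h : ℕ} (hk : k ≤ h) (v : EuclideanSpace ℝ (Fin k)) :
    EuclideanSpace ℝ (Fin h) :=
  (WithLp.equiv 2 (Fin h → ℝ)).symm fun t => if ht : (t : ℕ) < k then v ⟨t, ht⟩ else 0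

/-- A network (agent positions `x ∈ (ℝ^k)^N`, anchor positions `a`, edge sets `EX`, `EA`,
and squared distances `d2X`, `d2A` on the edges) is *non-contractible* if for every
`h ≥ k` there is no configuration `x' ∈ (ℝ^h)^N`, differing from the zero-padded true
configuration at some agent, with `‖(a_ℓ;0) - x'_j‖² ≤ d_{jℓ}²` on every agent–anchor
edge and `‖x'_i - x'_j‖² ≤ d_{ij}²` on every agent–agent edge. -/
def NonContractible {N M k : ℕ} (x : Fin N → EuclideanSpace ℝ (Fin k))
    (a : Fin M → EuclideanSpace ℝ (Fin k))
    (EX : Set (Fin N × Fin N)) (EA : Set (Fin N × Fin M))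
    (d2X : Fin N × Fin N → ℝ) (d2A : Fin N × Fin M → ℝ) : Prop :=
  ∀ (h : ℕ) (hk : k ≤ h), ¬ ∃ x' : Fin N → EuclideanSpace ℝ (Fin h),
    (∀ p ∈ EA, ‖padZero hk (a p.2) - x' p.1‖ ^ 2 ≤ d2A p) ∧
    (∀ p ∈ EX, ‖x' p.1 - x' p.2‖ ^ 2 ≤ d2X p) ∧
    (∃ j, x' j ≠ padZero hk (x j))


private lemma eucl_norm_sq' {n : ℕ} (v : EuclideanSpace ℝ (Fin n)) :
    ‖v‖ ^ 2 = ∑ t, (v t) ^ 2 := by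
  rw [EuclideanSpace.norm_eq, Real.sq_sqrt (by positivity)]
  simp [sq_abs]

private lemma sum_sq_expand {n : ℕ} (u w : Fin n → ℝ) :
    ∑ t, (u t - w t) ^ 2 =
      (∑ t, u t * u t) - (∑ t, u t * w t) - (∑ t, w t * u t) + ∑ t, w t * w t := by
  rw [← Finset.sum_sub_distrib, ← Finset.sum_sub_distrib, ← Finset.sum_add_distrib]
  exact Finset.sum_congr rfl fun t _ => by ring

/-- Bias-only noise model, with every agent incident to at least one LOS edge: if the LOS
network (the true positions together with the LOS edges and true distances on them) is
non-contractible, then every zero-objective feasible point `(X̂, Y, B)` of the cooperative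
SDP relaxation satisfies `X̂ = X`, i.e. the relaxation recovers the true positions. -/
theorem stmt_8 {N M k : ℕ}
    (x : Fin N → EuclideanSpace ℝ (Fin k)) (a : Fin M → EuclideanSpace ℝ (Fin k))
    (EX : Set (Fin N × Fin N)) (EA : Set (Fin N × Fin M))
    (b0X : Fin N × Fin N → ℝ) (b0A : Fin N × Fin M → ℝ)
    (hb0X : ∀ p ∈ EX, 0 ≤ b0X p) (hb0A : ∀ p ∈ EA, 0 ≤ b0A p)
    (dtX : Fin N × Fin N → ℝ) (dtA : Fin N × Fin M → ℝ)
    (hdtX : ∀ p ∈ EX, dtX p = ‖x p.1 - x p.2‖ ^ 2 + b0X p)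
    (hdtA : ∀ p ∈ EA, dtA p = ‖x p.1 - a p.2‖ ^ 2 + b0A p)
    (hLOS : ∀ i : Fin N,
      (∃ j, ((i, j) ∈ EX ∧ b0X (i, j) = 0) ∨ ((j, i) ∈ EX ∧ b0X (j, i) = 0)) ∨
      (∃ ℓ, (i, ℓ) ∈ EA ∧ b0A (i, ℓ) = 0))
    (hnc : NonContractible x a
      {p | p ∈ EX ∧ b0X p = 0} {p | p ∈ EA ∧ b0A p = 0}
      (fun p => ‖x p.1 - x p.2‖ ^ 2) (fun p => ‖x p.1 - a p.2‖ ^ 2)) :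
    ∀ xhat Y bX bA, ZeroObjFeasible a EX EA dtX dtA xhat Y bX bA → xhat = x := by
  intro xhat Y bX bA hfeas
  obtain ⟨hsym, hpsd, hbX, hbA, hcX, hcA⟩ := hfeas
  obtain ⟨B, hB⟩ : ∃ B : Matrix (Fin N) (Fin N) ℝ, Y - gramMatrix xhat = Bᴴ * B := by
    open scoped MatrixOrder in exact CStarAlgebra.nonneg_iff_eq_star_mul_self.mp hpsd.nonneg
  have hk : k ≤ k + N := Nat.le_add_right k N
  set x' : Fin N → EuclideanSpace ℝ (Fin (k + N)) := fun i =>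
    (WithLp.equiv 2 (Fin (k + N) → ℝ)).symm fun t =>
      if ht : (t : ℕ) < k then xhat i ⟨t, ht⟩
      else B ⟨(t : ℕ) - k, by have := t.isLt; omega⟩ i with hx'
  -- entries of Y
  have hY : ∀ i j, Y i j = (∑ t, xhat i t * xhat j t) + ∑ s, B s i * B s j := by
    intro i j
    have h1 : Y i j - gramMatrix xhat i j = (Bᴴ * B) i j := by
      rw [← Matrix.sub_apply, hB]
    have h2 : gramMatrix xhat i j = ∑ t, xhat i t * xhat j t := by
      simp [gramMatrix, PiLp.inner_apply, RCLike.inner_apply, mul_comm]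
    have h3 : (Bᴴ * B) i j = ∑ s, B s i * B s j := by
      simp [Matrix.mul_apply, Matrix.conjTranspose_apply]
    rw [← h2, ← h3]; linarith
  -- coordinates of x'
  have hxc : ∀ i (t : Fin k), x' i (Fin.castAdd N t) = xhat i t := by
    intro i t
    show (if ht : ((Fin.castAdd N t : Fin (k + N)) : ℕ) < k then
        xhat i ⟨_, ht⟩ else _) = xhat i t
    rw [dif_pos (by simpa using t.isLt)]
    exact congrArg (xhat i) (Fin.ext (by simp))
  have hxn : ∀ i (s : Fin N), x' i (Fin.natAdd k s) = B s i := by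
    intro i s
    show (if ht : ((Fin.natAdd k s : Fin (k + N)) : ℕ) < k then
        xhat i ⟨_, ht⟩ else B ⟨_, _⟩ i) = B s i
    rw [dif_neg (by simp)]
    congr 1
    ext
    simp
  -- padZero coordinates
  have hpc : ∀ (v : EuclideanSpace ℝ (Fin k)) (t : Fin k),
      padZero hk v (Fin.castAdd N t) = v t := by
    intro v t
    show (if ht : ((Fin.castAdd N t : Fin (k + N)) : ℕ) < k then
        v ⟨_, ht⟩ else 0) = v t
    rw [dif_pos (by simpa using t.isLt)]
    exact congrArg v (Fin.ext (by simp))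
  have hpn : ∀ (v : EuclideanSpace ℝ (Fin k)) (s : Fin N),
      padZero hk v (Fin.natAdd k s) = 0 := by
    intro v s
    show (if ht : ((Fin.natAdd k s : Fin (k + N)) : ℕ) < k then
        v ⟨_, ht⟩ else 0) = 0
    rw [dif_neg (by simp)]
  -- agent-agent quadratic form
  have hquadX : ∀ i j : Fin N,
      (Pi.single i 1 - Pi.single j 1) ⬝ᵥ (Y *ᵥ (Pi.single i 1 - Pi.single j 1))
        = ‖x' i - x' j‖ ^ 2 := by
    intro i j
    have lhs : (Pi.single i 1 - Pi.single j 1) ⬝ᵥ (Y *ᵥ (Pi.single i 1 - Pi.single j 1))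
        = Y i i - Y i j - Y j i + Y j j := by
      simp [Matrix.mulVec_sub, sub_dotProduct, dotProduct_sub,
        single_dotProduct]
      ring
    rw [lhs, eucl_norm_sq']
    have hc : ∀ t : Fin (k + N), (x' i - x' j) t = x' i t - x' j t := fun t => rfl
    simp only [hc]
    rw [Fin.sum_univ_add (f := fun t : Fin (k + N) => (x' i t - x' j t) ^ 2)]
    simp only [hxc, hxn]
    rw [sum_sq_expand, sum_sq_expand (fun s => B s i) (fun s => B s j),
      hY i i, hY i j, hY j i, hY j j]
    ring
  -- agent-anchor quadratic form
  have hquadA : ∀ (i : Fin N) (ℓ : Fin M),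
      (Pi.single i (1:ℝ)) ⬝ᵥ (Y *ᵥ Pi.single i 1) - 2 * ⟪a ℓ, xhat i⟫ + ‖a ℓ‖ ^ 2
        = ‖padZero hk (a ℓ) - x' i‖ ^ 2 := by
    intro i ℓ
    have lhs : (Pi.single i (1:ℝ)) ⬝ᵥ (Y *ᵥ Pi.single i 1) = Y i i := by
      simp [single_dotProduct]
    rw [lhs, eucl_norm_sq' (padZero hk (a ℓ) - x' i)]
    have hc : ∀ t : Fin (k + N), (padZero hk (a ℓ) - x' i) t
        = padZero hk (a ℓ) t - x' i t := fun t => rfl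
    simp only [hc]
    rw [Fin.sum_univ_add (f := fun t : Fin (k + N) => (padZero hk (a ℓ) t - x' i t) ^ 2)]
    simp only [hxc, hxn, hpc, hpn]
    rw [sum_sq_expand, sum_sq_expand (fun _ : Fin N => (0:ℝ)) (fun s => B s i), hY i i]
    have hip : ⟪a ℓ, xhat i⟫ = ∑ t, a ℓ t * xhat i t := by
      simp [PiLp.inner_apply, RCLike.inner_apply, mul_comm]
    have hna : ‖a ℓ‖ ^ 2 = ∑ t, a ℓ t * a ℓ t := by
      rw [eucl_norm_sq' (a ℓ)]
      exact Finset.sum_congr rfl fun t _ => pow_two (a ℓ t)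
    rw [hip, hna]
    have e1 : ∑ t : Fin k, xhat i t * a ℓ t = ∑ t : Fin k, a ℓ t * xhat i t :=
      Finset.sum_congr rfl fun t _ => mul_comm _ _
    simp only [zero_mul, mul_zero, Finset.sum_const_zero, e1]
    ring
  -- non-contractibility forces x' to be the padded truth
  have key : ∀ j, x' j = padZero hk (x j) := by
    by_contra hcon
    push_neg at hcon
    refine hnc (k + N) hk ⟨x', ?_, ?_, hcon⟩
    · rintro p ⟨hpE, hp0⟩
      dsimp only
      have h0 := hcA p hpE
      have hd := hdtA p hpE
      have hb := hbA p hpE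
      have hq := hquadA p.1 p.2
      rw [← hq]
      rw [hd, hp0] at h0
      linarith
    · rintro p ⟨hpE, hp0⟩
      dsimp only
      have h0 := hcX p hpE
      have hd := hdtX p hpE
      have hb := hbX p hpE
      have hq := hquadX p.1 p.2
      rw [← hq]
      rw [hd, hp0] at h0
      linarith
  -- extract first k coordinates
  funext i
  ext t
  have h1 : x' i (Fin.castAdd N t) = padZero hk (x i) (Fin.castAdd N t) := by
    rw [key i]
  rwa [hxc, hpc] at h1
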